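/- Let Λ: (Z/2)^m → (Z/2)^n be a characteristic function over a simplicial complex K, ω ∈ row Λ, and for each oriented face σ ∈ K_ω define f_{σ,ω} = Σ_{ω'⊆ω∖σ} (−2)^{|ω'|} u_σ t_{ω'} ∈ R_K. Then for every g ∈ ker Λ, the action φ_g fixes f_{σ,ω}, i.e., f_{σ,ω} lies in the ker Λ-invariant submodule R(K,Λ). -/

import Mathlib

open Finset

noncomputable section

abbrev FA (m : ℕ) := FreeAlgebra ℤ (Fin m ⊕ Fin m)

def uf (m : ℕ) (i : Fin m) : FA m := FreeAlgebra.ι ℤ (Sum.inl i)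
def tf (m : ℕ) (i : Fin m) : FA m := FreeAlgebra.ι ℤ (Sum.inr i)

/-- `u_σ` in the free algebra (product in increasing order). -/
def ufProd (m : ℕ) (σ : Finset (Fin m)) : FA m :=
  ((σ.sort (· ≤ ·)).map (uf m)).prod

/-- The defining relations of the DGA `R_K`: the relations of `R` together with
`u_σ = 0` for non-faces `σ ∉ K`. -/
inductive RKRel (m : ℕ) (K : Finset (Fin m) → Prop) : FA m → FA m → Prop
  | ut_same (i : Fin m) : RKRel m K (uf m i * tf m i) (uf m i)
  | tu_same (i : Fin m) : RKRel m K (tf m i * uf m i) 0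
  | ut_comm {i j : Fin m} (h : i ≠ j) : RKRel m K (uf m i * tf m j) (tf m j * uf m i)
  | tt_same (i : Fin m) : RKRel m K (tf m i * tf m i) (tf m i)
  | uu_same (i : Fin m) : RKRel m K (uf m i * uf m i) 0
  | uu_anti {i j : Fin m} (h : i ≠ j) : RKRel m K (uf m i * uf m j) (-(uf m j * uf m i))
  | tt_comm (i j : Fin m) : RKRel m K (tf m i * tf m j) (tf m j * tf m i)
  | notface (σ : Finset (Fin m)) (h : ¬ K σ) : RKRel m K (ufProd m σ) 0

/-- The DGA `R_K` (as a ring). -/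
abbrev RK (m : ℕ) (K : Finset (Fin m) → Prop) := RingQuot (RKRel m K)

def uqK (m : ℕ) (K : Finset (Fin m) → Prop) (i : Fin m) : RK m K :=
  RingQuot.mkRingHom (RKRel m K) (uf m i)
def tqK (m : ℕ) (K : Finset (Fin m) → Prop) (i : Fin m) : RK m K :=
  RingQuot.mkRingHom (RKRel m K) (tf m i)

def uProdK (m : ℕ) (K : Finset (Fin m) → Prop) (σ : Finset (Fin m)) : RK m K :=
  ((σ.sort (· ≤ ·)).map (uqK m K)).prod
def tProdK (m : ℕ) (K : Finset (Fin m) → Prop) (τ : Finset (Fin m)) : RK m K :=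
  ((τ.sort (· ≤ ·)).map (tqK m K)).prod

/-- `f_{σ,ω} = Σ_{ω' ⊆ ω∖σ} (−2)^{|ω'|} u_σ t_{ω'} ∈ R_K`. -/
def fEl (m : ℕ) (K : Finset (Fin m) → Prop) (σ ω : Finset (Fin m)) : RK m K :=
  ∑ ω' ∈ (ω \ σ).powerset, (-2 : ℤ) ^ ω'.card • (uProdK m K σ * tProdK m K ω')

/-- The product `Π_{i∈ω'} t'_i` where `t'_i = t_i` if `i ∉ g` and `t'_i = 1 − t_i` if
`i ∈ g` (product in increasing order). -/
def tPrimeProd (m : ℕ) (K : Finset (Fin m) → Prop) [DecidableEq (Fin m)]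
    (g : Finset (Fin m)) (ω' : Finset (Fin m)) : RK m K :=
  ((ω'.sort (· ≤ ·)).map (fun i => if i ∈ g then 1 - tqK m K i else tqK m K i)).prod

/-- The indicator vector of a finite set of indices. -/
def indVec (m : ℕ) (A : Finset (Fin m)) : Fin m → ZMod 2 :=
  fun i => if i ∈ A then 1 else 0


section Aux

variable {m : ℕ} {K : Finset (Fin m) → Prop}

/-- Sorted product of `f` over a finset. -/
def sProd (f : Fin m → RK m K) (S : Finset (Fin m)) : RK m K :=
  ((S.sort (· ≤ ·)).map f).prod

lemma sProd_empty (f : Fin m → RK m K) : sProd f ∅ = 1 := by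
  simp [sProd]

lemma pairwise_commute_map (f : Fin m → RK m K)
    (hf : ∀ i j, Commute (f i) (f j)) (l : List (Fin m)) :
    (l.map f).Pairwise Commute := by
  induction l with
  | nil => simp
  | cons a l ih =>
    simp only [List.map_cons, List.pairwise_cons]
    refine ⟨fun x hx => ?_, ih⟩
    obtain ⟨b, -, rfl⟩ := List.mem_map.1 hx
    exact hf a b

lemma sProd_insert (f : Fin m → RK m K) (hf : ∀ i j, Commute (f i) (f j))
    {i : Fin m} {S : Finset (Fin m)} (hi : i ∉ S) :
    sProd f (insert i S) = f i * sProd f S := by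
  have h1 : List.Perm ((insert i S).sort (· ≤ ·)) (i :: S.sort (· ≤ ·)) :=
    (Finset.sort_perm_toList _ _).trans
      ((Finset.toList_insert hi).trans ((Finset.sort_perm_toList _ _).symm.cons i))
  have := (h1.map f).prod_eq' (pairwise_commute_map f hf _)
  simpa [sProd] using this

lemma commute_one_sub_smul {a b : RK m K} (h : Commute a b) (r s : ℤ) :
    Commute (1 - r • a) (1 - s • b) :=
  (Commute.one_right _).sub_right
    ((Commute.one_left _).sub_left ((h.smul_left r).smul_right s))

lemma expand (f : Fin m → RK m K) (hf : ∀ i j, Commute (f i) (f j))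
    (S : Finset (Fin m)) :
    ∀ u : RK m K, ∑ ω' ∈ S.powerset, (-2 : ℤ) ^ ω'.card • (u * sProd f ω')
      = u * sProd (fun i => 1 - (2 : ℤ) • f i) S := by
  have hf' : ∀ i j, Commute (1 - (2:ℤ) • f i) (1 - (2:ℤ) • f j) := fun i j =>
    commute_one_sub_smul (hf i j) 2 2
  induction S using Finset.induction_on with
  | empty => intro u; simp [sProd_empty]
  | @insert i S hi ih =>
    intro u
    rw [Finset.sum_powerset_insert hi]
    have hstep : ∀ t ∈ S.powerset, (-2 : ℤ) ^ (insert i t).card • (u * sProd f (insert i t))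
        = (-2 : ℤ) • ((-2 : ℤ) ^ t.card • ((u * f i) * sProd f t)) := by
      intro t ht
      have hit : i ∉ t := fun h => hi (Finset.mem_powerset.1 ht h)
      rw [Finset.card_insert_of_notMem hit, sProd_insert f hf hit, pow_succ,
        mul_comm ((-2:ℤ) ^ t.card), mul_smul, ← mul_assoc]
    rw [Finset.sum_congr rfl hstep, ← Finset.smul_sum (N := RK m K) (r := (-2:ℤ)), ih u, ih (u * f i),
      sProd_insert _ hf' hi]
    rw [sub_mul, one_mul, mul_sub, smul_mul_assoc, mul_smul_comm, mul_assoc]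
    module

lemma tq_commute (i j : Fin m) : Commute (tqK m K i) (tqK m K j) := by
  have h := RingQuot.mkRingHom_rel (RKRel.tt_comm (K := K) i j)
  simp only [map_mul] at h
  exact h

lemma sign_flip (g : Finset (Fin m)) (S : Finset (Fin m)) :
    sProd (fun i => 1 - (2:ℤ) • (if i ∈ g then 1 - tqK m K i else tqK m K i)) S
      = (-1 : ℤ) ^ (g ∩ S).card • sProd (fun i => 1 - (2:ℤ) • tqK m K i) S := by
  have htp : ∀ i j, Commute (if i ∈ g then 1 - tqK m K i else tqK m K i)
      (if j ∈ g then 1 - tqK m K j else tqK m K j) := by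
    intro i j
    have h := tq_commute (K := K) i j
    split_ifs with h1 h2 h2
    · exact (Commute.one_right _).sub_right ((Commute.one_left _).sub_left h)
    · exact (Commute.one_left _).sub_left h
    · exact (Commute.one_right _).sub_right h
    · exact h
  have htp' : ∀ i j, Commute (1 - (2:ℤ) • (if i ∈ g then 1 - tqK m K i else tqK m K i))
      (1 - (2:ℤ) • (if j ∈ g then 1 - tqK m K j else tqK m K j)) := fun i j =>
    commute_one_sub_smul (htp i j) 2 2
  have hq : ∀ i j, Commute (1 - (2:ℤ) • tqK m K i) (1 - (2:ℤ) • tqK m K j) := fun i j =>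
    commute_one_sub_smul (tq_commute i j) 2 2
  induction S using Finset.induction_on with
  | empty => simp [sProd_empty]
  | @insert i S hi ih =>
    rw [sProd_insert _ htp' hi, sProd_insert _ hq hi, ih]
    by_cases hig : i ∈ g
    · have hcard : g ∩ insert i S = insert i (g ∩ S) := Finset.inter_insert_of_mem hig
      have hiS : i ∉ g ∩ S := fun h => hi (Finset.mem_inter.1 h).2
      have hneg : (1 : RK m K) - (2:ℤ) • (1 - tqK m K i) = (-1 : ℤ) • (1 - (2:ℤ) • tqK m K i) := by
        module
      rw [hcard, Finset.card_insert_of_notMem hiS, if_pos hig, hneg, pow_succ,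
        mul_smul_comm, smul_mul_assoc, smul_smul, mul_comm]
    · have hcard : g ∩ insert i S = g ∩ S := by
        rw [Finset.inter_insert_of_notMem hig]
      rw [hcard, if_neg hig, mul_smul_comm]

lemma even_card_inter {n : ℕ} (Λ : (Fin m → ZMod 2) →ₗ[ZMod 2] (Fin n → ZMod 2))
    (g : Finset (Fin m)) (hg : Λ (indVec m g) = 0) (ω : Finset (Fin m))
    (hω : ∃ c : Fin n → ZMod 2, ∀ i, indVec m ω i = ∑ j, c j * Λ (Pi.single i 1) j) :
    Even (g ∩ ω).card := by
  obtain ⟨c, hc⟩ := hω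
  have hgsum : indVec m g = ∑ i : Fin m, indVec m g i • Pi.single i 1 := by
    ext j; rw [Finset.sum_apply]; simp [Pi.single_apply]
  have hΛg : ∀ j, Λ (indVec m g) j = ∑ i : Fin m, indVec m g i * Λ (Pi.single i 1) j := by
    intro j
    conv_lhs => rw [hgsum]
    rw [map_sum, Finset.sum_apply]
    refine Finset.sum_congr rfl fun i _ => ?_
    rw [map_smul, Pi.smul_apply, smul_eq_mul]
  have key : ((g ∩ ω).card : ZMod 2) = 0 := by
    have h1 : ((g ∩ ω).card : ZMod 2) = ∑ i : Fin m, indVec m g i * indVec m ω i := by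
      have : ∀ i : Fin m, indVec m g i * indVec m ω i
          = (if i ∈ g ∩ ω then (1 : ZMod 2) else 0) := by
        intro i
        by_cases h1 : i ∈ g <;> by_cases h2 : i ∈ ω <;>
          simp [indVec, Finset.mem_inter, h1, h2]
      rw [Finset.sum_congr rfl fun i _ => this i, Finset.sum_ite_mem,
        Finset.univ_inter, Finset.sum_const, nsmul_eq_mul, mul_one]
    have h2 : ∑ i : Fin m, indVec m g i * indVec m ω i = 0 := by
      calc ∑ i : Fin m, indVec m g i * indVec m ω i
          = ∑ i : Fin m, ∑ j, indVec m g i * (c j * Λ (Pi.single i 1) j) := by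
            refine Finset.sum_congr rfl fun i _ => ?_
            rw [hc i, Finset.mul_sum]
        _ = ∑ j, ∑ i : Fin m, indVec m g i * (c j * Λ (Pi.single i 1) j) :=
            Finset.sum_comm
        _ = ∑ j, c j * ∑ i : Fin m, indVec m g i * Λ (Pi.single i 1) j := by
            refine Finset.sum_congr rfl fun j _ => ?_
            rw [Finset.mul_sum]
            refine Finset.sum_congr rfl fun i _ => by ring
        _ = ∑ j, c j * Λ (indVec m g) j := by
            refine Finset.sum_congr rfl fun j _ => by rw [hΛg j]
        _ = 0 := by rw [hg]; simp
    rw [h1, h2]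
  have : (2 : ℕ) ∣ (g ∩ ω).card := (ZMod.natCast_eq_zero_iff _ 2).1 key
  exact even_iff_two_dvd.mpr this

end Aux

/-- Lemma 3.3, first part: for a characteristic function `Λ` over `K`,
`g ∈ ker Λ` and `ω ∈ row Λ`, the element `f_{σ,ω}` is fixed by the action `φ_g`.  The
action on the monomial `u_σ t_{ω'}` is `(−1)^{|g∩σ|} u_σ Π_{i∈ω'} t'_i`, so invariance
reads: `Σ_{ω'⊆ω∖σ} (−2)^{|ω'|} (−1)^{|g∩σ|} u_σ Π t'_i = f_{σ,ω}`. -/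
theorem fEl_invariant (m n : ℕ)
    (K : Finset (Fin m) → Prop)
    (hK : ∀ σ τ, K σ → τ ⊆ σ → K τ)
    (Λ : (Fin m → ZMod 2) →ₗ[ZMod 2] (Fin n → ZMod 2))
    (hsurj : Function.Surjective Λ)
    (hchar : ∀ σ : Finset (Fin m), K σ →
      LinearIndependent (ZMod 2) (fun i : σ => Λ (Pi.single (i : Fin m) 1)))
    (g : Finset (Fin m)) (hg : Λ (indVec m g) = 0)
    (ω : Finset (Fin m))
    (hω : ∃ c : Fin n → ZMod 2, ∀ i, indVec m ω i = ∑ j, c j * Λ (Pi.single i 1) j)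
    (σ : Finset (Fin m)) (hσ : K σ) (hσω : σ ⊆ ω) :
    ∑ ω' ∈ (ω \ σ).powerset,
        (-2 : ℤ) ^ ω'.card •
          ((-1 : ℤ) ^ (g ∩ σ).card • (uProdK m K σ * tPrimeProd m K g ω')) =
      fEl m K σ ω := by
  classical
  have ht : ∀ i j, Commute (tqK m K i) (tqK m K j) := tq_commute
  have htp : ∀ i j, Commute ((fun i => if i ∈ g then 1 - tqK m K i else tqK m K i) i)
      ((fun i => if i ∈ g then 1 - tqK m K i else tqK m K i) j) := by
    intro i j
    have h := tq_commute (K := K) i j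
    simp only
    split_ifs with h1 h2 h2
    · exact (Commute.one_right _).sub_right ((Commute.one_left _).sub_left h)
    · exact (Commute.one_left _).sub_left h
    · exact (Commute.one_right _).sub_right h
    · exact h
  have htPrime : ∀ ω', tPrimeProd m K g ω'
      = sProd (fun i => if i ∈ g then 1 - tqK m K i else tqK m K i) ω' := fun _ => rfl
  have htProd : ∀ ω', tProdK m K ω' = sProd (tqK m K) ω' := fun _ => rfl
  have hL : ∑ ω' ∈ (ω \ σ).powerset,
      (-2 : ℤ) ^ ω'.card •
        ((-1 : ℤ) ^ (g ∩ σ).card • ((uProdK m K σ) * tPrimeProd m K g ω'))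
      = (-1 : ℤ) ^ (g ∩ σ).card •
          ((-1 : ℤ) ^ (g ∩ (ω \ σ)).card •
            ((uProdK m K σ) * sProd (fun i => 1 - (2:ℤ) • tqK m K i) (ω \ σ))) := by
    have : ∀ ω' ∈ (ω \ σ).powerset, (-2 : ℤ) ^ ω'.card •
        ((-1 : ℤ) ^ (g ∩ σ).card • ((uProdK m K σ) * tPrimeProd m K g ω'))
        = (-1 : ℤ) ^ (g ∩ σ).card •
          ((-2 : ℤ) ^ ω'.card • ((uProdK m K σ) * sProd (fun i => if i ∈ g then 1 - tqK m K i else tqK m K i) ω')) := by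
      intro ω' _
      rw [htPrime, smul_comm]
    rw [Finset.sum_congr rfl this, ← Finset.smul_sum (N := RK m K) (r := (-1 : ℤ) ^ (g ∩ σ).card), expand _ htp (ω \ σ) (uProdK m K σ),
      sign_flip g (ω \ σ), mul_smul_comm]
  have hR : fEl m K σ ω = (uProdK m K σ) * sProd (fun i => 1 - (2:ℤ) • tqK m K i) (ω \ σ) := by
    unfold fEl
    rw [← expand (tqK m K) ht (ω \ σ) (uProdK m K σ)]
    rfl
  rw [hL, hR, smul_smul, ← pow_add]
  have hunion : g ∩ σ ∪ g ∩ (ω \ σ) = g ∩ ω := by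
    rw [← Finset.inter_union_distrib_left, Finset.union_sdiff_of_subset hσω]
  have hdisj : Disjoint (g ∩ σ) (g ∩ (ω \ σ)) := by
    apply Finset.disjoint_left.mpr
    intro a ha hb
    exact (Finset.mem_sdiff.1 (Finset.mem_inter.1 hb).2).2 (Finset.mem_inter.1 ha).2
  have hcard : (g ∩ σ).card + (g ∩ (ω \ σ)).card = (g ∩ ω).card := by
    rw [← Finset.card_union_of_disjoint hdisj, hunion]
  rw [hcard, (even_card_inter Λ g hg ω hω).neg_one_pow, one_smul]


end
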